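/- For integers m ≥ λ ≥ 0 with m - λ even, the number of affine Temperley–Lieb (λ,m)-diagrams with λ through lines and no non-contractible loops equals the binomial coefficient C(m, (m-λ)/2). -/

import Mathlib

/-- `x` lies strictly inside the clockwise (cyclic) arc from `i` to `j` on `m` points
arranged on a circle. -/
def inOpenArc {m : ℕ} (i j x : Fin m) : Prop :=
  0 < (x - i).val ∧ (x - i).val < (j - i).val

/-- `x` lies on the closed clockwise arc from `i` to `j`. -/
def inClosedArc {m : ℕ} (i j x : Fin m) : Prop :=
  x = i ∨ x = j ∨ inOpenArc i j x

/-- An affine (annular) Temperley--Lieb top `(λ,m)`-diagram with `λ` through lines and no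
non-contractible loops: `λ` marked through points on a circle of `m` points, and a system
of cups, each cup being recorded together with the boundary arc it bounds (an ordered pair
`(i,j)` denoting the clockwise arc from `i` to `j`).  Cups have pairwise distinct
endpoints, every point is either a through point or a cup endpoint, no through point lies
inside a cup's arc, and the arcs of any two cups are either nested or disjoint (annular
planarity). -/
structure AffineTLTop (m lam : ℕ) where
  through : Finset (Fin m)
  card_through : through.card = lam
  arcs : Finset (Fin m × Fin m)
  arc_ne : ∀ a ∈ arcs, a.1 ≠ a.2
  endpoints_disjoint : ∀ a ∈ arcs, ∀ b ∈ arcs, a ≠ b →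
    a.1 ≠ b.1 ∧ a.1 ≠ b.2 ∧ a.2 ≠ b.1 ∧ a.2 ≠ b.2
  through_iff : ∀ x : Fin m, x ∈ through ↔ ∀ a ∈ arcs, x ≠ a.1 ∧ x ≠ a.2
  through_outside : ∀ x ∈ through, ∀ a ∈ arcs, ¬inOpenArc a.1 a.2 x
  planar : ∀ a ∈ arcs, ∀ b ∈ arcs, a ≠ b →
    (∀ x : Fin m, inClosedArc a.1 a.2 x → inOpenArc b.1 b.2 x) ∨
    (∀ x : Fin m, inClosedArc b.1 b.2 x → inOpenArc a.1 a.2 x) ∨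
    (∀ x : Fin m, ¬(inClosedArc a.1 a.2 x ∧ inClosedArc b.1 b.2 x))

open Fin.NatCast
open Fin.CommRing

lemma first_hit (g : ℕ → ℤ) (hstep : ∀ t, g (t+1) = g t + 1 ∨ g (t+1) = g t - 1)
    (a b : ℕ) (c : ℤ) (hab : a ≤ b) (ha : c < g a) (hb : g b ≤ c) :
    ∃ u, a < u ∧ u ≤ b ∧ g u = c ∧ ∀ v, a ≤ v → v < u → c < g v := by
  classical
  have hPb : a < b ∧ g b ≤ c := by
    refine ⟨lt_of_le_of_ne hab ?_, hb⟩
    rintro rfl; exact absurd hb (not_le.mpr ha)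
  have hex : ∃ u, a < u ∧ g u ≤ c := ⟨b, hPb⟩
  set u := Nat.find hex with hu
  have hspec : a < u ∧ g u ≤ c := Nat.find_spec hex
  have hub : u ≤ b := Nat.find_min' hex hPb
  have hgt : ∀ v, a ≤ v → v < u → c < g v := by
    intro v hav hvu
    rcases eq_or_lt_of_le hav with rfl | hlt
    · exact ha
    · have := Nat.find_min hex hvu
      push_neg at this
      exact this hlt
  have hu1 : u - 1 + 1 = u := Nat.succ_pred_eq_of_pos (Nat.lt_of_le_of_lt (Nat.zero_le a) hspec.1)
  have hprev : c < g (u - 1) := hgt _ (Nat.le_pred_of_lt hspec.1) (by omega)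
  have hgu : g u = c := by
    rcases hstep (u - 1) with hs | hs <;> rw [hu1] at hs <;> omega
  exact ⟨u, hspec.1, hub, hgu, hgt⟩

section FSum
variable {n : ℕ}

/-- Signed prefix sum: +1 for openers, -1 otherwise, over points i+1, ..., i+t. -/
def fsum (S : Finset (Fin (n+1))) (i : Fin (n+1)) (t : ℕ) : ℤ :=
  ∑ s ∈ Finset.Icc 1 t, (if i + (s : Fin (n+1)) ∈ S then (1:ℤ) else -1)

lemma fsum_zero (S : Finset (Fin (n+1))) (i : Fin (n+1)) : fsum S i 0 = 0 := by
  simp [fsum]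

lemma fsum_succ (S : Finset (Fin (n+1))) (i : Fin (n+1)) (t : ℕ) :
    fsum S i (t+1) = fsum S i t + (if i + ((t+1 : ℕ) : Fin (n+1)) ∈ S then (1:ℤ) else -1) := by
  rw [fsum, Finset.sum_Icc_succ_top (by omega)]
  rfl

lemma fsum_step (S : Finset (Fin (n+1))) (i : Fin (n+1)) (t : ℕ) :
    fsum S i (t+1) = fsum S i t + 1 ∨ fsum S i (t+1) = fsum S i t - 1 := by
  rw [fsum_succ]
  split <;> [left; right] <;> ring

/-- Relating prefix sums based at `i + p` to those based at `i`. -/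
lemma fsum_shift (S : Finset (Fin (n+1))) (i : Fin (n+1)) (p t : ℕ) :
    fsum S (i + (p : Fin (n+1))) t = fsum S i (p + t) - fsum S i p := by
  induction t with
  | zero => simp [fsum_zero]
  | succ t ih =>
      rw [fsum_succ, ih, ← add_assoc, fsum_succ]
      have : i + (p : Fin (n+1)) + ((t+1 : ℕ) : Fin (n+1)) = i + ((p + t + 1 : ℕ) : Fin (n+1)) := by
        push_cast
        ring
      rw [this]
      ring

lemma fsum_count (S : Finset (Fin (n+1))) (i : Fin (n+1)) (t : ℕ) :
    fsum S i t = ((Finset.Icc 1 t).filter (fun s : ℕ => i + (s : Fin (n+1)) ∈ S)).card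
      - ((Finset.Icc 1 t).filter (fun s : ℕ => i + (s : Fin (n+1)) ∉ S)).card := by
  rw [fsum, Finset.sum_ite, Finset.sum_const, Finset.sum_const]
  push_cast
  ring
end FSum

section Core
variable {n : ℕ}

/-- cast helpers -/
lemma off_val (i : Fin (n+1)) (s : ℕ) (hs : s < n+1) :
    ((i + (s : Fin (n+1))) - i).val = s := by
  rw [add_sub_cancel_left, Fin.val_natCast, Nat.mod_eq_of_lt hs]

lemma point_off (i x : Fin (n+1)) : i + (((x - i).val : ℕ) : Fin (n+1)) = x := by
  rw [Fin.cast_val_eq_self]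
  ring_nf

lemma off_inj (i : Fin (n+1)) {s t : ℕ} (hs : s < n+1) (ht : t < n+1)
    (h : i + (s : Fin (n+1)) = i + (t : Fin (n+1))) : s = t := by
  have h2 := congrArg Fin.val (add_left_cancel h)
  simpa [Fin.val_natCast, Nat.mod_eq_of_lt hs, Nat.mod_eq_of_lt ht] using h2

/-- `T` is the position of the matched closer of the opener `i`. -/
def cloSpec (S : Finset (Fin (n+1))) (i : Fin (n+1)) (T : ℕ) : Prop :=
  0 < T ∧ fsum S i T = -1 ∧ ∀ v < T, 0 ≤ fsum S i v

lemma cloSpec_unique {S : Finset (Fin (n+1))} {i : Fin (n+1)} {T T' : ℕ}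
    (h : cloSpec S i T) (h' : cloSpec S i T') : T = T' := by
  rcases lt_trichotomy T T' with hlt | he | hlt
  · have := h'.2.2 T hlt; rw [h.2.1] at this; omega
  · exact he
  · have := h.2.2 T' hlt; rw [h'.2.1] at this; omega

lemma cloSpec_mem_iff {S : Finset (Fin (n+1))} {i : Fin (n+1)} (t : ℕ) :
    (i + ((t+1 : ℕ) : Fin (n+1)) ∈ S ↔ fsum S i (t+1) = fsum S i t + 1) := by
  rw [fsum_succ]
  split <;> simp_all <;> omega

lemma cloSpec_closer_not_mem {S : Finset (Fin (n+1))} {i : Fin (n+1)} {T : ℕ}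
    (h : cloSpec S i T) : i + (T : Fin (n+1)) ∉ S := by
  obtain ⟨hT0, hT, hmin⟩ := h
  obtain ⟨t, rfl⟩ : ∃ t, T = t + 1 := ⟨T - 1, by omega⟩
  intro hmem
  rw [cloSpec_mem_iff] at hmem
  have := hmin t (by omega)
  omega

lemma fsum_nonneg_of_lt {S : Finset (Fin (n+1))} {i : Fin (n+1)} {T : ℕ}
    (h : cloSpec S i T) {v : ℕ} (hv : v < T) : 0 ≤ fsum S i v := h.2.2 v hv

/-- The key nesting property. -/
lemma cloSpec_nest {S : Finset (Fin (n+1))} {i i' : Fin (n+1)} {T T' : ℕ}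
    (hT : cloSpec S i T) (hT' : cloSpec S i' T') (hi' : i' ∈ S)
    (hp0 : 0 < (i' - i).val) (hpT : (i' - i).val < T) : (i' - i).val + T' < T := by
  set p := (i' - i).val with hp
  have hi'eq : i' = i + (p : Fin (n+1)) := (point_off i i').symm
  -- fsum S i p ≥ 1
  have hfp : 1 ≤ fsum S i p := by
    obtain ⟨q, hq⟩ : ∃ q, p = q + 1 := ⟨p - 1, by omega⟩
    have hmem : i + ((q+1 : ℕ) : Fin (n+1)) ∈ S := by rw [← hq, ← hi'eq]; exact hi'
    rw [cloSpec_mem_iff] at hmem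
    have h0 := hT.2.2 q (by omega)
    rw [hq, hmem]; omega
  obtain ⟨u, hpu, huT, hfu, hmin⟩ := first_hit (fsum S i) (fsum_step S i) p T (fsum S i p - 1)
    (le_of_lt hpT) (by omega) (by rw [hT.2.1]; omega)
  have huT' : u < T := by
    rcases lt_or_eq_of_le huT with h | h
    · exact h
    · exfalso; rw [h, hT.2.1] at hfu; omega
  have hspec : cloSpec S i' (u - p) := by
    refine ⟨by omega, ?_, ?_⟩
    · rw [hi'eq, fsum_shift]
      have : p + (u - p) = u := by omega
      rw [this, hfu]; ring
    · intro v hv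
      rw [hi'eq, fsum_shift]
      have := hmin (p + v) (by omega) (by omega)
      omega
  have := cloSpec_unique hT' hspec
  omega

/-- Distinct openers have distinct closers. -/
lemma cloSpec_closer_inj {S : Finset (Fin (n+1))} {i i' : Fin (n+1)} {T T' : ℕ}
    (hT : cloSpec S i T) (hT' : cloSpec S i' T') (hi : i ∈ S) (hi' : i' ∈ S)
    (hne : i ≠ i') (hTn : T < n+1) (hT'n : T' < n+1) :
    i + (T : Fin (n+1)) ≠ i' + (T' : Fin (n+1)) := by
  set p := (i' - i).val with hp
  have hp0 : 0 < p := by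
    rcases Nat.eq_zero_or_pos p with h0 | h; swap; exact h
    · exfalso
      have : i' - i = 0 := Fin.ext h0
      rw [sub_eq_zero] at this; exact hne this.symm
  have hpn : p < n + 1 := (i' - i).isLt
  have hi'eq : i' = i + (p : Fin (n+1)) := (point_off i i').symm
  intro heq
  -- offsets congruence : T ≡ p + T' [MOD n+1]
  have hcong : T = (p + T') % (n+1) := by
    rw [hi'eq, add_assoc] at heq
    have h2 : (T : Fin (n+1)) = ((p : Fin (n+1)) + (T' : Fin (n+1))) := add_left_cancel heq
    have h3 := congrArg Fin.val h2
    rw [Fin.val_natCast, Nat.mod_eq_of_lt hTn] at h3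
    have : ((p : Fin (n+1)) + (T' : Fin (n+1))) = ((p + T' : ℕ) : Fin (n+1)) := by push_cast; ring
    rw [this, Fin.val_natCast] at h3
    exact h3
  rcases lt_trichotomy p T with hlt | he | hgt
  · have := cloSpec_nest hT hT' hi' hp0 hlt
    rw [Nat.mod_eq_of_lt (by omega)] at hcong
    omega
  · -- i' = i + T = closer of i, but i' ∈ S
    have : i' = i + (T : Fin (n+1)) := by rw [hi'eq, he]
    exact cloSpec_closer_not_mem hT (this ▸ hi')
  · -- p > T : use nesting with roles swapped
    have hpT' : p + T' = T + (n+1) := by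
      rcases Nat.lt_or_ge (p + T') (n+1) with hc | hc
      · rw [Nat.mod_eq_of_lt hc] at hcong; omega
      · rw [Nat.mod_eq_sub_mod hc, Nat.mod_eq_of_lt (by omega)] at hcong; omega
    have hT0 := hT.1
    have hin : i' + (((n+1) - p : ℕ) : Fin (n+1)) = i := by
      rw [hi'eq, add_assoc, ← Nat.cast_add]
      have hsum : p + ((n+1) - p) = n+1 := by omega
      rw [hsum, Fin.natCast_self, add_zero]
    have hq : (i - i').val = (n+1) - p := by
      rw [← hin]; exact off_val i' _ (by omega)
    have := cloSpec_nest hT' hT hi (by omega : 0 < (i - i').val)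
      (by rw [hq]; omega : (i - i').val < T')
    rw [hq] at this
    omega


lemma mod_inj_Icc {a b m : ℕ} (ha1 : 1 ≤ a) (ha2 : a ≤ m) (hb1 : 1 ≤ b) (hb2 : b ≤ m)
    (h : a % m = b % m) : a = b := by
  rcases Nat.lt_or_ge a m with hA | hA <;> rcases Nat.lt_or_ge b m with hB | hB
  · rwa [Nat.mod_eq_of_lt hA, Nat.mod_eq_of_lt hB] at h
  · have hb : b = m := by omega
    subst hb; rw [Nat.mod_eq_of_lt hA, Nat.mod_self] at h; omega
  · have ha : a = m := by omega
    subst ha; rw [Nat.mod_self, Nat.mod_eq_of_lt hB] at h; omega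
  · omega

/-- total sum over the whole circle -/
lemma fsum_total (S : Finset (Fin (n+1))) (i : Fin (n+1)) :
    fsum S i (n+1) = 2 * S.card - (n+1) := by
  rw [fsum_count]
  have h1 : ((Finset.Icc 1 (n+1)).filter (fun s : ℕ => i + (s : Fin (n+1)) ∈ S)).card = S.card := by
    apply Finset.card_nbij (fun s : ℕ => i + (s : Fin (n+1)))
    · intro a ha; exact (Finset.mem_filter.mp ha).2
    · intro a ha b hb hab
      simp only [Finset.coe_filter, Set.mem_setOf_eq, Finset.mem_Icc] at ha hb
      have hab' : i + ((a:ℕ) : Fin (n+1)) = i + ((b:ℕ) : Fin (n+1)) := hab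
      have h2 := congrArg Fin.val (add_left_cancel hab')
      rw [Fin.val_natCast, Fin.val_natCast] at h2
      exact mod_inj_Icc ha.1.1 ha.1.2 hb.1.1 hb.1.2 h2
    · intro x hx
      simp only [Finset.coe_filter, Set.mem_setOf_eq, Finset.mem_Icc, Set.mem_image]
      rcases Nat.eq_zero_or_pos ((x - i).val) with h0 | hp
      · have hxi : x = i := by
          have : x - i = 0 := Fin.ext h0
          rwa [sub_eq_zero] at this
        refine ⟨n+1, ⟨⟨by omega, le_refl _⟩, ?_⟩, ?_⟩
        · rw [Fin.natCast_self, add_zero]; exact hxi ▸ hx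
        · rw [Fin.natCast_self, add_zero]; exact hxi.symm
      · refine ⟨(x - i).val, ⟨⟨hp, by omega⟩, ?_⟩, ?_⟩
        · rw [Fin.cast_val_eq_self]
          have hxx : i + (x - i) = x := by ring
          rw [hxx]; exact hx
        · rw [Fin.cast_val_eq_self]; ring
  have h2 : ((Finset.Icc 1 (n+1)).filter (fun s : ℕ => i + (s : Fin (n+1)) ∉ S)).card
      = (n+1) - S.card := by
    have := Finset.card_filter_add_card_filter_not (s := Finset.Icc 1 (n+1))
      (p := fun s : ℕ => i + (s : Fin (n+1)) ∈ S)
    rw [h1] at this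
    have hcard : (Finset.Icc 1 (n+1)).card = n+1 := by rw [Nat.card_Icc]; omega
    omega
  rw [h1, h2]
  have hle : S.card ≤ n+1 := by
    have := Finset.card_le_card (Finset.subset_univ S)
    simpa using this
  push_cast
  omega

lemma cloSpec_exists {S : Finset (Fin (n+1))} {i : Fin (n+1)}
    (hi : i ∈ S) (hcard : 2 * S.card ≤ n + 1) : ∃ T ≤ n, cloSpec S i T := by
  have hn : fsum S i n ≤ -1 := by
    have htot := fsum_total S i
    have : i + ((n+1 : ℕ) : Fin (n+1)) ∈ S := by
      rw [Fin.natCast_self, add_zero]; exact hi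
    rw [cloSpec_mem_iff] at this
    have hc : (2 * S.card : ℤ) - (n+1) ≤ 0 := by
      have : (2 * S.card : ℤ) ≤ (n+1 : ℤ) := by exact_mod_cast hcard
      omega
    omega
  obtain ⟨u, hu0, hun, hfu, hmin⟩ := first_hit (fsum S i) (fsum_step S i) 0 n (-1)
    (Nat.zero_le n) (by rw [fsum_zero]; omega) hn
  exact ⟨u, hun, hu0, hfu, fun v hv => by
    have := hmin v (Nat.zero_le v) hv; omega⟩

/-- Every non-opener point strictly inside a matched arc is the closer of some opener. -/
lemma closer_of_inside {S : Finset (Fin (n+1))} {i : Fin (n+1)} {T s : ℕ}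
    (hT : cloSpec S i T) (hs0 : 0 < s) (hsT : s < T)
    (hns : i + (s : Fin (n+1)) ∉ S) :
    ∃ i'' ∈ S, ∃ T'', cloSpec S i'' T'' ∧ i'' + (T'' : Fin (n+1)) = i + (s : Fin (n+1)) := by
  set f := fsum S i with hf
  obtain ⟨s', rfl⟩ : ∃ s', s = s' + 1 := ⟨s - 1, by omega⟩
  have hstep : f (s'+1) = f s' + 1 ∨ f (s'+1) = f s' - 1 := fsum_step S i s'
  have hdown : f (s'+1) = f s' - 1 := by
    rcases hstep with h | h
    · exact absurd ((cloSpec_mem_iff s').mpr h) hns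
    · exact h
  set v := f (s'+1) with hv
  have hv0 : 0 ≤ v := hT.2.2 _ hsT
  have hfs' : f s' = v + 1 := by omega
  have hgstep : ∀ t, (-f (t+1)) = -f t + 1 ∨ (-f (t+1)) = -f t - 1 := by
    intro t
    rcases fsum_step S i t with h | h <;> [right; left] <;> rw [← hf] at h <;> omega
  -- find a witness u ≤ s' with f u = v
  have hwit : ∃ u ≤ s', f u = v := by
    rcases eq_or_lt_of_le hv0 with h0 | hpos
    · exact ⟨0, Nat.zero_le _, by simp only [hf, fsum_zero]; omega⟩
    · obtain ⟨u, _, hu2, hu3, _⟩ := first_hit (fun t => -f t) hgstep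
        0 s' (-v) (Nat.zero_le _)
        (show -v < -f 0 by simp only [hf, fsum_zero]; omega)
        (show -f s' ≤ -v by rw [hfs']; omega)
      have hu3' : -f u = -v := hu3
      exact ⟨u, hu2, by omega⟩
  classical
  set p := Nat.findGreatest (fun u => f u = v) s' with hpdef
  obtain ⟨u, hu1, hu2⟩ := hwit
  have hfp : f p = v := by
    have := Nat.findGreatest_spec (P := fun u => f u = v) hu1 hu2
    rw [← hpdef] at this
    exact this
  have hgreat : ∀ w, p < w → w ≤ s' → f w ≠ v := fun w hw1 hw2 =>
    Nat.findGreatest_is_greatest hw1 hw2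
  have hps' : p < s' := by
    rcases eq_or_lt_of_le (Nat.findGreatest_le (P := fun u => f u = v) s') with h | h
    · exfalso; rw [← hpdef] at h; rw [h, hfs'] at hfp; omega
    · exact h
  -- every value strictly between p and s'+1 is at least v+1
  have hnov : ∀ w, p < w → w ≤ s' → v + 1 ≤ f w := by
    intro w hw1 hw2
    by_contra hc
    push_neg at hc
    have hle : f w ≤ v := by omega
    rcases eq_or_lt_of_le hle with he | hlt
    · exact hgreat w hw1 hw2 he
    · obtain ⟨w', hw'1, hw'2, hw'3, _⟩ := first_hit (fun t => -f t) hgstep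
        w s' (-v) hw2 (show -v < -f w by omega) (show -f s' ≤ -v by rw [hfs']; omega)
      have hw'3' : -f w' = -v := hw'3
      exact hgreat w' (by omega) hw'2 (by omega)
  have hfp1 : f (p+1) = v + 1 := by
    have h1 := hnov (p+1) (by omega) (by omega)
    rcases fsum_step S i p with h | h <;> rw [← hf] at h <;> omega
  have hmem : i + ((p+1 : ℕ) : Fin (n+1)) ∈ S := by
    rw [cloSpec_mem_iff, ← hf]
    omega
  refine ⟨i + ((p+1 : ℕ) : Fin (n+1)), hmem, s' - p, ⟨by omega, ?_, ?_⟩, ?_⟩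
  · rw [fsum_shift]
    have he : (p + 1) + (s' - p) = s' + 1 := by omega
    rw [he, ← hf]
    omega
  · intro t ht
    rw [fsum_shift]
    rw [← hf]
    rcases Nat.eq_zero_or_pos t with rfl | htpos
    · rw [Nat.add_zero]
      omega
    · have h1 := hnov (p + 1 + t) (by omega) (by omega)
      omega
  · rw [add_assoc, ← Nat.cast_add]
    congr 2
    omega

end Core

section ArcBasic
variable {n : ℕ}

lemma mem_closedArc_iff (i j x : Fin (n+1)) (hij : i ≠ j) :
    inClosedArc i j x ↔ (x - i).val ≤ (j - i).val := by
  constructor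
  · rintro (rfl | rfl | hx)
    · simp
    · exact le_refl _
    · exact le_of_lt hx.2
  · intro hx
    rcases Nat.eq_or_lt_of_le hx with heq | hlt
    · right; left
      have h1 : x - i = j - i := Fin.ext heq
      have h2 := congrArg (fun z => i + z) h1
      simpa using h2
    · rcases Nat.eq_zero_or_pos ((x - i).val) with h0 | hp
      · left
        have : x - i = 0 := Fin.ext h0
        rw [sub_eq_zero] at this; exact this
      · right; right; exact ⟨hp, hlt⟩

lemma self_not_openArc (i j : Fin (n+1)) : ¬ inOpenArc i j i := by
  intro h
  simp [inOpenArc] at h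

lemma snd_not_openArc (i j : Fin (n+1)) : ¬ inOpenArc i j j := by
  intro h
  exact lt_irrefl _ h.2

end ArcBasic

lemma off_pos_of_ne {i x : Fin (n+1)} (hne : x ≠ i) : 0 < (x - i).val := by
  rcases Nat.eq_zero_or_pos ((x - i).val) with h0 | h
  · exfalso
    have : x - i = 0 := Fin.ext h0
    rw [sub_eq_zero] at this
    exact hne this
  · exact h

lemma off_neg {i i' : Fin (n+1)} (hne : i' ≠ i) :
    (i - i').val = (n+1) - (i' - i).val := by
  set p := (i' - i).val with hp
  have hp0 : 0 < p := off_pos_of_ne hne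
  have hlt : p < n+1 := (i' - i).isLt
  have hin : i' + ((((n+1) - p : ℕ)) : Fin (n+1)) = i := by
    have h1 : i' = i + ((p : ℕ) : Fin (n+1)) := by
      rw [hp, Fin.cast_val_eq_self]; ring
    rw [h1, add_assoc, ← Nat.cast_add]
    have hsum : p + ((n+1) - p) = n+1 := by omega
    rw [hsum, Fin.natCast_self, add_zero]
  rw [← hin]
  exact off_val i' _ (by omega)

lemma off_trans {i i' x : Fin (n+1)} (h : (i' - i).val + (x - i').val < n+1) :
    (x - i).val = (i' - i).val + (x - i').val := by
  have hx : i + (((i' - i).val + (x - i').val : ℕ) : Fin (n+1)) = x := by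
    rw [Nat.cast_add, Fin.cast_val_eq_self, Fin.cast_val_eq_self, ← add_assoc]
    ring
  conv_lhs => rw [← hx]
  exact off_val i _ h


section Diagram
variable {n lam : ℕ} (D : AffineTLTop (n+1) lam)

/-- The set of openers (first endpoints) of a diagram. -/
def openers (D : AffineTLTop (n+1) lam) : Finset (Fin (n+1)) := D.arcs.image Prod.fst

lemma fst_injOn : Set.InjOn Prod.fst (D.arcs : Set ((Fin (n+1)) × (Fin (n+1)))) := by
  intro a ha b hb hab
  by_contra hne
  exact (D.endpoints_disjoint a ha b hb hne).1 hab

lemma snd_injOn : Set.InjOn Prod.snd (D.arcs : Set ((Fin (n+1)) × (Fin (n+1)))) := by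
  intro a ha b hb hab
  by_contra hne
  exact (D.endpoints_disjoint a ha b hb hne).2.2.2 hab

lemma snd_not_opener {b : Fin (n+1) × Fin (n+1)} (hb : b ∈ D.arcs) : b.2 ∉ openers D := by
  intro hmem
  obtain ⟨c, hc, hceq⟩ := Finset.mem_image.mp hmem
  by_cases hbc : b = c
  · exact D.arc_ne c hc (hbc ▸ hceq)
  · exact (D.endpoints_disjoint b hb c hc hbc).2.2.1 hceq.symm

/-- An arc having an endpoint strictly inside another arc is nested inside it. -/
lemma nested_of_endpoint_inside {a b : Fin (n+1) × Fin (n+1)} (ha : a ∈ D.arcs)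
    (hb : b ∈ D.arcs) (hab : a ≠ b) {x : Fin (n+1)} (hx : inOpenArc a.1 a.2 x)
    (hxb : x = b.1 ∨ x = b.2) :
    ∀ y, inClosedArc b.1 b.2 y → inOpenArc a.1 a.2 y := by
  have hxcb : inClosedArc b.1 b.2 x := by
    rcases hxb with rfl | rfl
    · exact Or.inl rfl
    · exact Or.inr (Or.inl rfl)
  rcases D.planar a ha b hb hab with hc | hc | hc
  · exfalso
    have := hc x (Or.inr (Or.inr hx))
    rcases hxb with rfl | rfl
    · exact self_not_openArc _ _ this
    · exact snd_not_openArc _ _ this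
  · exact hc
  · exfalso
    exact hc x ⟨Or.inr (Or.inr hx), hxcb⟩

/-- Offset arithmetic for a nested arc. -/
lemma nested_offsets {i j i' j' : Fin (n+1)} (hij : i ≠ j) (hij' : i' ≠ j')
    (hsub : ∀ y, inClosedArc i' j' y → inOpenArc i j y) :
    0 < (i' - i).val ∧ (j' - i).val = (i' - i).val + (j' - i').val ∧
      (j' - i).val < (j - i).val ∧ 0 < (j' - i').val := by
  have hi' : inOpenArc i j i' := hsub i' (Or.inl rfl)
  have hj' : inOpenArc i j j' := hsub j' (Or.inr (Or.inl rfl))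
  set p := (i' - i).val with hp
  set T' := (j' - i').val with hT'
  have hT'0 : 0 < T' := by
    rcases Nat.eq_zero_or_pos T' with h0 | h; swap; exact h
    exfalso
    have : j' - i' = 0 := Fin.ext h0
    rw [sub_eq_zero] at this
    exact hij' this.symm
  -- i is not on the closed arc of (i', j')
  have hinot : ¬ inClosedArc i' j' i := by
    intro hcl
    exact self_not_openArc i j (hsub i hcl)
  -- hence T' < (n+1) - p
  have hiv : (i - i').val = (n+1) - p := by
    have hp0 : 0 < p := hi'.1
    have hin : i' + (((n+1) - p : ℕ) : Fin (n+1)) = i := by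
      have hi'eq : i' = i + (p : Fin (n+1)) := (point_off i i').symm
      rw [hi'eq, add_assoc, ← Nat.cast_add]
      have hsum : p + ((n+1) - p) = n+1 := by omega
      rw [hsum, Fin.natCast_self, add_zero]
    rw [← hin]
    exact off_val i' _ (by omega)
  have hT'lt : T' < (n+1) - p := by
    have h1 : ¬ (0 < (i - i').val ∧ (i - i').val < T') := fun hc =>
      hinot (Or.inr (Or.inr hc))
    rw [hiv] at h1
    push_neg at h1
    have hp0 : 0 < p := hi'.1
    have hppos : 0 < (n+1) - p := by
      have := (i' - i).isLt
      omega
    have hle : T' ≤ (n+1) - p := by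
      by_contra hc
      push_neg at hc
      exact absurd (h1 hppos) (by omega)
    rcases Nat.eq_or_lt_of_le hle with he | h
    · exfalso
      -- then i = j', but j' is inside the open arc and i is not
      have hj'eq : j' = i' + ((T' : ℕ) : Fin (n+1)) := by
        rw [hT', Fin.cast_val_eq_self]; ring
      have hj'i : j' = i := by
        rw [hj'eq, he, ← hiv, Fin.cast_val_eq_self]; ring
      exact self_not_openArc i j (hj'i ▸ hj')
    · exact h
  have hq : (j' - i).val = p + T' := by
    have h1 : j' = i + ((p + T' : ℕ) : Fin (n+1)) := by
      have hi'eq : i' = i + (p : Fin (n+1)) := (point_off i i').symm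
      have hj'eq : j' = i' + (T' : Fin (n+1)) := by
        rw [hT', Fin.cast_val_eq_self]; ring
      rw [hj'eq, hi'eq, add_assoc, ← Nat.cast_add]
    rw [h1]
    apply off_val
    have := (i' - i).isLt
    omega
  exact ⟨hi'.1, hq, hj'.2, hT'0⟩

lemma arc_of_open {a : Fin (n+1) × Fin (n+1)} (ha : a ∈ D.arcs) {x : Fin (n+1)}
    (hx : inOpenArc a.1 a.2 x) : ∃ b, b ∈ D.arcs ∧ (x = b.1 ∨ x = b.2) := by
  classical
  have hth : x ∉ D.through := fun hth => D.through_outside x hth a ha hx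
  have h2 := mt (D.through_iff x).mpr hth
  push_neg at h2
  obtain ⟨b, hb, hbx⟩ := h2
  by_cases h1 : x = b.1
  · exact ⟨b, hb, Or.inl h1⟩
  · exact ⟨b, hb, Or.inr (hbx h1)⟩

lemma arc_nest_offsets {a : Fin (n+1) × Fin (n+1)} (ha : a ∈ D.arcs)
    {b : Fin (n+1) × Fin (n+1)} (hb : b ∈ D.arcs) {x : Fin (n+1)}
    (hx : inOpenArc a.1 a.2 x) (hxb : x = b.1 ∨ x = b.2) :
    0 < (b.1 - a.1).val ∧ (b.2 - a.1).val = (b.1 - a.1).val + (b.2 - b.1).val ∧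
      (b.2 - a.1).val < (a.2 - a.1).val ∧ 0 < (b.2 - b.1).val := by
  have hab : a ≠ b := by
    rintro rfl
    rcases hxb with rfl | rfl
    · exact self_not_openArc _ _ hx
    · exact snd_not_openArc _ _ hx
  exact nested_offsets (D.arc_ne a ha) (D.arc_ne b hb)
    (nested_of_endpoint_inside D ha hb hab hx hxb)

lemma arc_cloSpec {a : Fin (n+1) × Fin (n+1)} (ha : a ∈ D.arcs) :
    cloSpec (openers D) a.1 ((a.2 - a.1).val) := by
  classical
  set S := openers D with hS
  obtain ⟨T, hT⟩ : ∃ T, ((a.2 - a.1).val) = T := ⟨_, rfl⟩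
  rw [hT]
  have hTn : T < n+1 := hT ▸ (a.2 - a.1).isLt
  have hT0 : 0 < T := by
    rcases Nat.eq_zero_or_pos T with h0 | h; swap; exact h
    exfalso
    have hz : a.2 - a.1 = 0 := by
      apply Fin.ext
      rw [hT, h0]
      simp
    rw [sub_eq_zero] at hz
    exact D.arc_ne a ha hz.symm
  have hopen : ∀ s : ℕ, 1 ≤ s → s < T → inOpenArc a.1 a.2 (a.1 + (s : Fin (n+1))) := by
    intro s h1 h2
    have hv := off_val a.1 s (by omega)
    exact ⟨by rw [hv]; omega, by rw [hv]; omega⟩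
  have hoffval : ∀ s : ℕ, s < n + 1 → ((a.1 + (s : Fin (n+1))) - a.1).val = s :=
    fun s hs => off_val a.1 s hs
  -- closers ↦ openers injection
  have hCO : ∀ t, t ≤ T - 1 →
      ((Finset.Icc 1 t).filter (fun s : ℕ => a.1 + (s : Fin (n+1)) ∉ S)).card ≤
      ((Finset.Icc 1 t).filter (fun s : ℕ => a.1 + (s : Fin (n+1)) ∈ S)).card := by
    intro t ht
    refine Finset.card_le_card_of_injOn
      (fun s : ℕ => if h : ∃ b, b ∈ D.arcs ∧ b.2 = a.1 + (s : Fin (n+1)) then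
        ((h.choose).1 - a.1).val else 0) ?_ ?_
    · intro s hs
      simp only [Finset.mem_coe, Finset.mem_filter, Finset.mem_Icc] at hs ⊢
      obtain ⟨⟨hs1, hs2⟩, hsS⟩ := hs
      have hx := hopen s hs1 (by omega)
      obtain ⟨b, hb, hxb⟩ := arc_of_open D ha hx
      have hxb2 : b.2 = a.1 + (s : Fin (n+1)) := by
        rcases hxb with h1 | h1
        · exfalso; exact hsS (h1 ▸ Finset.mem_image_of_mem Prod.fst hb)
        · exact h1.symm
      have hex : ∃ b, b ∈ D.arcs ∧ b.2 = a.1 + (s : Fin (n+1)) := ⟨b, hb, hxb2⟩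
      rw [dif_pos hex]
      obtain ⟨hbm, hbe⟩ := hex.choose_spec
      set c := hex.choose
      have hno := arc_nest_offsets D ha hbm hx (Or.inr hbe.symm)
      have hcs : (c.2 - a.1).val = s := by rw [hbe]; exact hoffval s (by omega)
      rw [hcs] at hno
      refine ⟨⟨hno.1, by omega⟩, ?_⟩
      have : a.1 + (((c.1 - a.1).val : ℕ) : Fin (n+1)) = c.1 := point_off a.1 c.1
      rw [this]
      exact Finset.mem_image_of_mem Prod.fst hbm
    · intro s hs s' hs' heq
      simp only [Finset.coe_filter, Set.mem_setOf_eq, Finset.mem_Icc] at hs hs'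
      obtain ⟨⟨hs1, hs2⟩, hsS⟩ := hs
      obtain ⟨⟨hs1', hs2'⟩, hsS'⟩ := hs'
      have hx := hopen s hs1 (by omega)
      have hx' := hopen s' hs1' (by omega)
      obtain ⟨b, hb, hxb⟩ := arc_of_open D ha hx
      obtain ⟨b', hb', hxb'⟩ := arc_of_open D ha hx'
      have hxb2 : b.2 = a.1 + (s : Fin (n+1)) := by
        rcases hxb with h1 | h1
        · exfalso; exact hsS (h1 ▸ Finset.mem_image_of_mem Prod.fst hb)
        · exact h1.symm
      have hxb2' : b'.2 = a.1 + (s' : Fin (n+1)) := by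
        rcases hxb' with h1 | h1
        · exfalso; exact hsS' (h1 ▸ Finset.mem_image_of_mem Prod.fst hb')
        · exact h1.symm
      have hex : ∃ c, c ∈ D.arcs ∧ c.2 = a.1 + (s : Fin (n+1)) := ⟨b, hb, hxb2⟩
      have hex' : ∃ c, c ∈ D.arcs ∧ c.2 = a.1 + (s' : Fin (n+1)) := ⟨b', hb', hxb2'⟩
      simp only [] at heq
      rw [dif_pos hex, dif_pos hex'] at heq
      obtain ⟨hcm, hce⟩ := hex.choose_spec
      obtain ⟨hcm', hce'⟩ := hex'.choose_spec
      have hfst : hex.choose.1 = hex'.choose.1 := by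
        have e1 := point_off a.1 hex.choose.1
        have e2 := point_off a.1 hex'.choose.1
        rw [← e1, ← e2, heq]
      have hcc : hex.choose = hex'.choose := fst_injOn D hcm hcm' hfst
      have : a.1 + (s : Fin (n+1)) = a.1 + (s' : Fin (n+1)) := by
        rw [← hce, ← hce', hcc]
      exact off_inj a.1 (by omega) (by omega) this
  -- openers ↦ closers injection
  have hOC : ((Finset.Icc 1 (T-1)).filter (fun s : ℕ => a.1 + (s : Fin (n+1)) ∈ S)).card ≤
      ((Finset.Icc 1 (T-1)).filter (fun s : ℕ => a.1 + (s : Fin (n+1)) ∉ S)).card := by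
    refine Finset.card_le_card_of_injOn
      (fun s : ℕ => if h : ∃ b, b ∈ D.arcs ∧ b.1 = a.1 + (s : Fin (n+1)) then
        ((h.choose).2 - a.1).val else 0) ?_ ?_
    · intro s hs
      simp only [Finset.mem_coe, Finset.mem_filter, Finset.mem_Icc] at hs ⊢
      obtain ⟨⟨hs1, hs2⟩, hsS⟩ := hs
      have hx := hopen s hs1 (by omega)
      obtain ⟨b, hb, hbe⟩ := Finset.mem_image.mp hsS
      have hex : ∃ b, b ∈ D.arcs ∧ b.1 = a.1 + (s : Fin (n+1)) := ⟨b, hb, hbe⟩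
      rw [dif_pos hex]
      obtain ⟨hcm, hce⟩ := hex.choose_spec
      set c := hex.choose
      have hno := arc_nest_offsets D ha hcm hx (Or.inl hce.symm)
      have hcs : (c.1 - a.1).val = s := by rw [hce]; exact hoffval s (by omega)
      rw [hcs] at hno
      refine ⟨⟨by omega, by omega⟩, ?_⟩
      have hpo : a.1 + (((c.2 - a.1).val : ℕ) : Fin (n+1)) = c.2 := point_off a.1 c.2
      rw [hpo]
      exact snd_not_opener D hcm
    · intro s hs s' hs' heq
      simp only [Finset.coe_filter, Set.mem_setOf_eq, Finset.mem_Icc] at hs hs'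
      obtain ⟨⟨hs1, hs2⟩, hsS⟩ := hs
      obtain ⟨⟨hs1', hs2'⟩, hsS'⟩ := hs'
      obtain ⟨b, hb, hbe⟩ := Finset.mem_image.mp hsS
      obtain ⟨b', hb', hbe'⟩ := Finset.mem_image.mp hsS'
      have hex : ∃ c, c ∈ D.arcs ∧ c.1 = a.1 + (s : Fin (n+1)) := ⟨b, hb, hbe⟩
      have hex' : ∃ c, c ∈ D.arcs ∧ c.1 = a.1 + (s' : Fin (n+1)) := ⟨b', hb', hbe'⟩
      simp only [] at heq
      rw [dif_pos hex, dif_pos hex'] at heq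
      obtain ⟨hcm, hce⟩ := hex.choose_spec
      obtain ⟨hcm', hce'⟩ := hex'.choose_spec
      have hsnd : hex.choose.2 = hex'.choose.2 := by
        have e1 := point_off a.1 hex.choose.2
        have e2 := point_off a.1 hex'.choose.2
        rw [← e1, ← e2, heq]
      have hcc : hex.choose = hex'.choose := snd_injOn D hcm hcm' hsnd
      have : a.1 + (s : Fin (n+1)) = a.1 + (s' : Fin (n+1)) := by
        rw [← hce, ← hce', hcc]
      exact off_inj a.1 (by omega) (by omega) this
  have hnonneg : ∀ v, v < T → 0 ≤ fsum S a.1 v := by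
    intro v hv
    rw [fsum_count]
    have := hCO v (by omega)
    omega
  have hzero : fsum S a.1 (T - 1) = 0 := by
    rw [fsum_count]
    have h1 := hCO (T-1) (le_refl _)
    omega
  have hlast : fsum S a.1 T = -1 := by
    obtain ⟨t, rfl⟩ : ∃ t, T = t + 1 := ⟨T - 1, by omega⟩
    rw [fsum_succ]
    have hpt : a.1 + ((t+1 : ℕ) : Fin (n+1)) = a.2 := by
      have hpo := point_off a.1 a.2
      rw [hT] at hpo
      exact hpo
    rw [hpt, if_neg (snd_not_opener D ha)]
    simp only [Nat.add_sub_cancel] at hzero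
    rw [hzero]
    ring
  exact ⟨hT0, hlast, hnonneg⟩

end Diagram

section Inj
variable {n lam : ℕ}

lemma AffineTLTop.ext' {m lam : ℕ} {D E : AffineTLTop m lam}
    (h1 : D.through = E.through) (h2 : D.arcs = E.arcs) : D = E := by
  cases D; cases E
  simp only at h1 h2
  subst h1; subst h2
  rfl

lemma arcs_determined (D E : AffineTLTop (n+1) lam) (h : openers D = openers E) :
    D.arcs = E.arcs := by
  have key : ∀ (D' E' : AffineTLTop (n+1) lam), openers D' = openers E' →
      D'.arcs ⊆ E'.arcs := by
    intro D' E' hDE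
    intro a ha
    have ha1 : a.1 ∈ openers E' := by
      rw [← hDE]
      exact Finset.mem_image_of_mem Prod.fst ha
    obtain ⟨e, he, he1⟩ := Finset.mem_image.mp ha1
    have s1 := arc_cloSpec D' ha
    have s2 := arc_cloSpec E' he
    rw [hDE] at s1
    rw [he1] at s2
    have hvv := cloSpec_unique s1 s2
    have ha2 : a.2 = e.2 := by
      have p1 := point_off a.1 a.2
      have p2 := point_off a.1 e.2
      rw [← p1, ← p2, hvv]
    have : a = e := Prod.ext (he1.symm) ha2
    rw [this]
    exact he
  exact Finset.Subset.antisymm (key D E h) (key E D h.symm)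

lemma diagram_eq_of_openers_eq (D E : AffineTLTop (n+1) lam)
    (h : openers D = openers E) : D = E := by
  have harcs := arcs_determined D E h
  apply AffineTLTop.ext'
  · ext x
    rw [D.through_iff, E.through_iff, harcs]
  · exact harcs

lemma card_arcs (D : AffineTLTop (n+1) lam) : n + 1 = lam + 2 * D.arcs.card := by
  classical
  set F := D.arcs.image Prod.fst with hF
  set Sd := D.arcs.image Prod.snd with hSd
  have hcF : F.card = D.arcs.card := Finset.card_image_of_injOn (fst_injOn D)
  have hcSd : Sd.card = D.arcs.card := Finset.card_image_of_injOn (snd_injOn D)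
  have hdisj1 : Disjoint F Sd := by
    rw [Finset.disjoint_left]
    intro x hxF hxSd
    obtain ⟨b, hb, hbe⟩ := Finset.mem_image.mp hxSd
    exact snd_not_opener D hb (hbe ▸ hxF)
  have hdisj2 : Disjoint D.through (F ∪ Sd) := by
    rw [Finset.disjoint_left]
    intro x hxT hxFS
    have := (D.through_iff x).mp hxT
    rcases Finset.mem_union.mp hxFS with hx | hx
    · obtain ⟨b, hb, hbe⟩ := Finset.mem_image.mp hx
      exact (this b hb).1 hbe.symm
    · obtain ⟨b, hb, hbe⟩ := Finset.mem_image.mp hx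
      exact (this b hb).2 hbe.symm
  have hcover : D.through ∪ (F ∪ Sd) = Finset.univ := by
    apply Finset.eq_univ_of_forall
    intro x
    by_cases hx : x ∈ D.through
    · exact Finset.mem_union_left _ hx
    · have := mt (D.through_iff x).mpr hx
      push_neg at this
      obtain ⟨b, hb, hbe⟩ := this
      apply Finset.mem_union_right
      by_cases h1 : x = b.1
      · exact Finset.mem_union_left _ (h1 ▸ Finset.mem_image_of_mem Prod.fst hb)
      · exact Finset.mem_union_right _ ((hbe h1) ▸ Finset.mem_image_of_mem Prod.snd hb)
  have := congrArg Finset.card hcover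
  rw [Finset.card_union_of_disjoint hdisj2, Finset.card_union_of_disjoint hdisj1,
    hcF, hcSd, Finset.card_univ, Fintype.card_fin, D.card_through] at this
  omega

lemma card_openers (D : AffineTLTop (n+1) lam) : (openers D).card = D.arcs.card :=
  Finset.card_image_of_injOn (fst_injOn D)

end Inj

section Build
variable {n : ℕ}

open scoped Classical in
noncomputable def cloN (S : Finset (Fin (n+1))) (i : Fin (n+1)) : ℕ :=
  if h : ∃ T ≤ n, cloSpec S i T then h.choose else 0

noncomputable def clo (S : Finset (Fin (n+1))) (i : Fin (n+1)) : Fin (n+1) :=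
  i + ((cloN S i : ℕ) : Fin (n+1))

lemma cloN_spec {S : Finset (Fin (n+1))} {i : Fin (n+1)} (hi : i ∈ S)
    (hc : 2 * S.card ≤ n + 1) : cloSpec S i (cloN S i) ∧ cloN S i ≤ n := by
  have hex := cloSpec_exists hi hc
  unfold cloN
  rw [dif_pos hex]
  exact ⟨hex.choose_spec.2, hex.choose_spec.1⟩

lemma clo_offset {S : Finset (Fin (n+1))} {i : Fin (n+1)} (hi : i ∈ S)
    (hc : 2 * S.card ≤ n + 1) : (clo S i - i).val = cloN S i :=
  off_val i _ (by have := (cloN_spec hi hc).2; omega)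

lemma clo_ne {S : Finset (Fin (n+1))} {i : Fin (n+1)} (hi : i ∈ S)
    (hc : 2 * S.card ≤ n + 1) : i ≠ clo S i := by
  intro h
  have h1 := clo_offset hi hc
  rw [← h] at h1
  simp at h1
  have := (cloN_spec hi hc).1.1
  omega

lemma clo_not_mem {S : Finset (Fin (n+1))} {i : Fin (n+1)} (hi : i ∈ S)
    (hc : 2 * S.card ≤ n + 1) : clo S i ∉ S :=
  cloSpec_closer_not_mem (cloN_spec hi hc).1

lemma clo_inj {S : Finset (Fin (n+1))} {i i' : Fin (n+1)} (hi : i ∈ S) (hi' : i' ∈ S)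
    (hne : i ≠ i') (hc : 2 * S.card ≤ n + 1) : clo S i ≠ clo S i' :=
  cloSpec_closer_inj (cloN_spec hi hc).1 (cloN_spec hi' hc).1 hi hi' hne
    (by have := (cloN_spec hi hc).2; omega) (by have := (cloN_spec hi' hc).2; omega)

lemma build_nest {S : Finset (Fin (n+1))} (hc : 2 * S.card ≤ n + 1)
    {i i' : Fin (n+1)} (hi : i ∈ S) (hi' : i' ∈ S)
    (hp : 0 < (i' - i).val) (hpT : (i' - i).val < cloN S i) :
    ∀ x, inClosedArc i' (clo S i') x → inOpenArc i (clo S i) x := by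
  have h1 := cloSpec_nest (cloN_spec hi hc).1 (cloN_spec hi' hc).1 hi' hp hpT
  intro x hx
  rw [mem_closedArc_iff _ _ _ (clo_ne hi' hc), clo_offset hi' hc] at hx
  have hTn := (cloN_spec hi hc).2
  have hoff : (x - i).val = (i' - i).val + (x - i').val :=
    off_trans (by omega)
  constructor
  · rw [hoff]; omega
  · rw [hoff, clo_offset hi hc]; omega

lemma build_planar {S : Finset (Fin (n+1))} (hc : 2 * S.card ≤ n + 1)
    {i i' : Fin (n+1)} (hi : i ∈ S) (hi' : i' ∈ S) (hne : i ≠ i') :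
    (∀ x : Fin (n+1), inClosedArc i (clo S i) x → inOpenArc i' (clo S i') x) ∨
    (∀ x : Fin (n+1), inClosedArc i' (clo S i') x → inOpenArc i (clo S i) x) ∨
    (∀ x : Fin (n+1), ¬(inClosedArc i (clo S i) x ∧ inClosedArc i' (clo S i') x)) := by
  set p := (i' - i).val with hpdef
  have hp0 : 0 < p := off_pos_of_ne (Ne.symm hne)
  have hpn : p < n + 1 := (i' - i).isLt
  have hq : (i - i').val = (n+1) - p := off_neg (Ne.symm hne)
  have hTn := (cloN_spec hi hc).2
  have hT'n := (cloN_spec hi' hc).2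
  have hT0 := (cloN_spec hi hc).1.1
  have hT'0 := (cloN_spec hi' hc).1.1
  rcases lt_trichotomy p (cloN S i) with hlt | heq | hgt
  · exact Or.inr (Or.inl (build_nest hc hi hi' hp0 hlt))
  · exfalso
    have : i' = clo S i := by
      rw [clo, ← heq, hpdef, Fin.cast_val_eq_self]
      ring
    exact clo_not_mem hi hc (this ▸ hi')
  · rcases lt_trichotomy ((n+1) - p) (cloN S i') with hlt' | heq' | hgt'
    · exact Or.inl (build_nest hc hi' hi (by omega) (by rw [hq] at *; omega))
    · exfalso
      have : i = clo S i' := by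
        rw [clo, ← heq', ← hq, Fin.cast_val_eq_self]
        ring
      exact clo_not_mem hi' hc (this ▸ hi)
    · refine Or.inr (Or.inr ?_)
      rintro x ⟨hxa, hxb⟩
      rw [mem_closedArc_iff _ _ _ (clo_ne hi hc), clo_offset hi hc] at hxa
      rw [mem_closedArc_iff _ _ _ (clo_ne hi' hc), clo_offset hi' hc] at hxb
      have hoff : (x - i).val = p + (x - i').val :=
        off_trans (by omega)
      omega

lemma build_closer_mem {S : Finset (Fin (n+1))} (hc : 2 * S.card ≤ n + 1)
    {x : Fin (n+1)} (hxS : x ∉ S) (hxC : x ∉ S.image (clo S)) :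
    ∀ i ∈ S, ¬ inOpenArc i (clo S i) x := by
  intro i hi hopen
  obtain ⟨h1, h2⟩ := hopen
  rw [clo_offset hi hc] at h2
  have hx : i + (((x - i).val : ℕ) : Fin (n+1)) = x := point_off i x
  have hxs : i + (((x - i).val : ℕ) : Fin (n+1)) ∉ S := by rw [hx]; exact hxS
  obtain ⟨i'', hi''S, T'', hspec'', heq⟩ :=
    closer_of_inside (cloN_spec hi hc).1 h1 h2 hxs
  have hT'' : T'' = cloN S i'' := cloSpec_unique hspec'' (cloN_spec hi''S hc).1
  apply hxC
  apply Finset.mem_image.mpr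
  refine ⟨i'', hi''S, ?_⟩
  rw [clo, ← hT'', heq, hx]

noncomputable def build (lam : ℕ) (S : Finset (Fin (n+1))) (hc : 2 * S.card + lam = n + 1) :
    AffineTLTop (n+1) lam where
  through := Finset.univ \ (S ∪ S.image (clo S))
  card_through := by
    have hc2 : 2 * S.card ≤ n + 1 := by omega
    have hdisj : Disjoint S (S.image (clo S)) := by
      rw [Finset.disjoint_left]
      intro x hxS hxI
      obtain ⟨i, hi, hie⟩ := Finset.mem_image.mp hxI
      exact clo_not_mem hi hc2 (hie ▸ hxS)
    have himg : (S.image (clo S)).card = S.card := by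
      apply Finset.card_image_of_injOn
      intro a ha b hb hab
      by_contra hne
      exact clo_inj ha hb hne hc2 hab
    rw [Finset.card_sdiff_of_subset (Finset.subset_univ _), Finset.card_union_of_disjoint hdisj,
      himg, Finset.card_univ, Fintype.card_fin]
    omega
  arcs := S.image (fun i => (i, clo S i))
  arc_ne := by
    intro a ha
    obtain ⟨i, hi, rfl⟩ := Finset.mem_image.mp ha
    exact clo_ne hi (by omega)
  endpoints_disjoint := by
    have hc2 : 2 * S.card ≤ n + 1 := by omega
    intro a ha b hb hab
    obtain ⟨i, hi, rfl⟩ := Finset.mem_image.mp ha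
    obtain ⟨i', hi', rfl⟩ := Finset.mem_image.mp hb
    have hne : i ≠ i' := by rintro rfl; exact hab rfl
    refine ⟨hne, fun h => ?_, fun h => ?_, clo_inj hi hi' hne hc2⟩
    · exact clo_not_mem hi' hc2 ((show i = clo S i' from h) ▸ hi)
    · exact clo_not_mem hi hc2 ((show clo S i = i' from h).symm ▸ hi')
  through_iff := by
    have hc2 : 2 * S.card ≤ n + 1 := by omega
    intro x
    simp only [Finset.mem_sdiff, Finset.mem_univ, true_and, Finset.mem_union, not_or]
    constructor
    · rintro ⟨hxS, hxI⟩ a ha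
      obtain ⟨i, hi, rfl⟩ := Finset.mem_image.mp ha
      refine ⟨fun h => hxS (h ▸ hi), fun h => hxI ?_⟩
      exact Finset.mem_image.mpr ⟨i, hi, h.symm⟩
    · intro hall
      constructor
      · intro hxS
        exact (hall (x, clo S x) (Finset.mem_image_of_mem _ hxS)).1 rfl
      · intro hxI
        obtain ⟨i, hi, hie⟩ := Finset.mem_image.mp hxI
        exact (hall (i, clo S i) (Finset.mem_image_of_mem _ hi)).2 hie.symm
  through_outside := by
    have hc2 : 2 * S.card ≤ n + 1 := by omega
    intro x hx a ha
    obtain ⟨i, hi, rfl⟩ := Finset.mem_image.mp ha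
    simp only [Finset.mem_sdiff, Finset.mem_univ, true_and, Finset.mem_union, not_or] at hx
    exact build_closer_mem hc2 hx.1 hx.2 i hi
  planar := by
    have hc2 : 2 * S.card ≤ n + 1 := by omega
    intro a ha b hb hab
    obtain ⟨i, hi, rfl⟩ := Finset.mem_image.mp ha
    obtain ⟨i', hi', rfl⟩ := Finset.mem_image.mp hb
    have hne : i ≠ i' := by rintro rfl; exact hab rfl
    exact build_planar hc2 hi hi' hne

lemma openers_build (lam : ℕ) (S : Finset (Fin (n+1))) (hc : 2 * S.card + lam = n + 1) :
    openers (build lam S hc) = S := by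
  show (S.image (fun i => (i, clo S i))).image Prod.fst = S
  rw [Finset.image_image]
  exact Finset.image_id

end Build

/-- The number of affine Temperley--Lieb `(λ,m)`-diagrams with `λ` through lines and no
non-contractible loops equals `C(m, (m-λ)/2)`. -/
theorem stmt_0 (m lam : ℕ) (h : lam ≤ m) (heven : Even (m - lam)) :
    Nat.card (AffineTLTop m lam) = m.choose ((m - lam) / 2) := by
  classical
  obtain ⟨k, hk⟩ : ∃ k, (m - lam) = 2 * k := by
    obtain ⟨r, hr⟩ := heven; exact ⟨r, by omega⟩
  have hdiv : (m - lam) / 2 = k := by omega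
  rw [hdiv]
  cases m with
  | zero =>
      have hl : lam = 0 := by omega
      have hk0 : k = 0 := by omega
      subst hl; subst hk0
      have hD0 : AffineTLTop 0 0 :=
        { through := ∅
          card_through := rfl
          arcs := ∅
          arc_ne := fun a ha => absurd ha (Finset.notMem_empty a)
          endpoints_disjoint := fun a ha => absurd ha (Finset.notMem_empty a)
          through_iff := fun x => x.elim0
          through_outside := fun x hx => absurd hx (Finset.notMem_empty x)
          planar := fun a ha => absurd ha (Finset.notMem_empty a) }
      have huniq : ∀ D E : AffineTLTop 0 0, D = E := by
        intro D E
        apply AffineTLTop.ext'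
        · have h1 : D.through = ∅ := Finset.eq_empty_of_forall_notMem (fun x => x.elim0)
          have h2 : E.through = ∅ := Finset.eq_empty_of_forall_notMem (fun x => x.elim0)
          rw [h1, h2]
        · have h1 : D.arcs = ∅ := Finset.eq_empty_of_forall_notMem (fun a _ => a.1.elim0)
          have h2 : E.arcs = ∅ := Finset.eq_empty_of_forall_notMem (fun a _ => a.1.elim0)
          rw [h1, h2]
      rw [Nat.choose_self]
      rw [Nat.card_eq_one_iff_unique]
      exact ⟨⟨fun D E => huniq D E⟩, ⟨hD0⟩⟩
  | succ n =>
      have hc : 2 * k + lam = n + 1 := by omega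
      set F : AffineTLTop (n+1) lam → {S : Finset (Fin (n+1)) // S.card = k} := fun D =>
        ⟨openers D, by
          have h1 := card_arcs D
          have h2 := card_openers D
          omega⟩ with hF
      have hinj : Function.Injective F := by
        intro D E hDE
        apply diagram_eq_of_openers_eq
        exact congrArg Subtype.val hDE
      have hsurj : Function.Surjective F := by
        rintro ⟨S, hS⟩
        refine ⟨build lam S (by omega), ?_⟩
        apply Subtype.ext
        exact openers_build lam S (by omega)
      rw [Nat.card_congr (Equiv.ofBijective F ⟨hinj, hsurj⟩), Nat.card_eq_fintype_card,
        Fintype.card_finset_len, Fintype.card_fin]
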